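/- arXiv:1703.00746 — 6 statements merged into one kernel-verified Lean document; each statement's English description precedes it below -/
import Mathlib

section
/- Let R be a commutative Noetherian ring, N a finitely generated R-module, M a submodule of N, and I an ideal of R. Define M :_N ⟨I⟩ to be the union of the submodules (M :_N Iⁿ) over all n ≥ 0 (which is the eventual stable value of this chain). Then the set of associated primes of N/(M :_N ⟨I⟩) equals {p ∈ Ass_R(N/M) : I ⊄ p}, i.e., Ass_R(N/(M :_N ⟨I⟩)) = Ass_R(N/M) \ V(I). -/
/-- The colon submodule `(P :_M I) = {x ∈ M | I • x ⊆ P}`. -/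
def Submodule.colonIdeal {R : Type*} [CommRing R] {M : Type*} [AddCommGroup M] [Module R M]
    (P : Submodule R M) (I : Ideal R) : Submodule R M where
  carrier := {x | ∀ r ∈ I, r • x ∈ P}
  add_mem' := fun ha hb r hr => by
    simpa [smul_add] using P.add_mem (ha r hr) (hb r hr)
  zero_mem' := fun r hr => by simp
  smul_mem' := fun c {x} hx r hr => by
    rw [smul_comm]
    exact P.smul_mem c (hx r hr)

/-- `(P :_M ⟨I⟩) = ⋃ n, (P :_M Iⁿ)`, the ultimate constant value of the chain `(P :_M Iⁿ)`. -/
def Submodule.colonInfty {R : Type*} [CommRing R] {M : Type*} [AddCommGroup M] [Module R M]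
    (P : Submodule R M) (I : Ideal R) : Submodule R M :=
  ⨆ n : ℕ, P.colonIdeal (I ^ n)

section Aux

variable {R : Type*} [CommRing R] {M : Type*} [AddCommGroup M] [Module R M]

lemma Submodule.mem_colonIdeal {P : Submodule R M} {J : Ideal R} {x : M} :
    x ∈ P.colonIdeal J ↔ ∀ r ∈ J, r • x ∈ P := Iff.rfl

lemma Submodule.colonIdeal_anti {P : Submodule R M} {J J' : Ideal R} (h : J ≤ J') :
    P.colonIdeal J' ≤ P.colonIdeal J := fun _ hx r hr => hx r (h hr)

lemma Submodule.colonIdeal_le_colonInfty (P : Submodule R M) (I : Ideal R) (n : ℕ) :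
    P.colonIdeal (I ^ n) ≤ P.colonInfty I := le_iSup (fun n : ℕ => P.colonIdeal (I ^ n)) n

lemma Submodule.exists_colonInfty_eq_colonIdeal [IsNoetherian R M]
    (P : Submodule R M) (I : Ideal R) :
    ∃ n : ℕ, P.colonInfty I = P.colonIdeal (I ^ n) := by
  have mono : Monotone fun n : ℕ => P.colonIdeal (I ^ n) := fun a b hab =>
    Submodule.colonIdeal_anti (Ideal.pow_le_pow_right hab)
  obtain ⟨n, hn⟩ := monotone_stabilizes_iff_noetherian.2 ‹_› ⟨_, mono⟩
  refine ⟨n, le_antisymm (iSup_le fun m => ?_) (Submodule.colonIdeal_le_colonInfty P I n)⟩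
  calc P.colonIdeal (I ^ m) ≤ P.colonIdeal (I ^ max m n) := mono (le_max_left _ _)
    _ = P.colonIdeal (I ^ n) := (hn _ (le_max_right m n)).symm

/-- The key special case: associated primes of the quotient by the `I`-power torsion. -/
lemma ass_quotient_colonInfty_bot [IsNoetherianRing R] [IsNoetherian R M] (I : Ideal R) :
    associatedPrimes R (M ⧸ (⊥ : Submodule R M).colonInfty I) =
      associatedPrimes R M \ {p : Ideal R | I ≤ p} := by
  set T := (⊥ : Submodule R M).colonInfty I with hT
  obtain ⟨n, hn⟩ := Submodule.exists_colonInfty_eq_colonIdeal (⊥ : Submodule R M) I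
  have hTkill : ∀ x ∈ T, ∀ r ∈ I ^ n, r • x = 0 := by
    intro x hx r hr
    have : x ∈ (⊥ : Submodule R M).colonIdeal (I ^ n) := hn ▸ hx
    simpa using this r hr
  ext p
  simp only [Set.mem_diff, Set.mem_setOf_eq, associatedPrimes, isAssociatedPrime_iff,
    Submodule.bot_colon']
  constructor
  · rintro ⟨hp, y, hy⟩
    obtain ⟨x, rfl⟩ := T.mkQ_surjective y
    have hIp : ¬ I ≤ p := by
      intro hIle
      have hxT : x ∈ T := by
        have hann : I ^ (n + 1) ≤ (Submodule.span R {x}).annihilator := by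
          rw [pow_succ]
          refine Ideal.mul_le.2 fun a ha b hb => ?_
          rw [Submodule.mem_annihilator_span_singleton, mul_smul]
          have hbp : b ∈ p := hIle hb
          rw [hy, Submodule.mem_annihilator_span_singleton] at hbp
          have hbx : b • x ∈ T := by
            rwa [← map_smul, Submodule.mkQ_apply, Submodule.Quotient.mk_eq_zero] at hbp
          exact hTkill _ hbx a ha
        refine Submodule.colonIdeal_le_colonInfty ⊥ I (n + 1) fun r hr => ?_
        simpa using (Submodule.mem_annihilator_span_singleton _ _).1 (hann hr)
      have hzero : T.mkQ x = 0 := (Submodule.Quotient.mk_eq_zero T).2 hxT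
      rw [hzero] at hy
      exact hp.ne_top (hy.trans (by rw [Submodule.span_zero_singleton, Submodule.annihilator_bot]))
    obtain ⟨s, hsI, hsp⟩ := SetLike.not_le_iff_exists.1 hIp
    refine ⟨⟨hp, ⟨s ^ n • x, ?_⟩⟩, hIp⟩
    ext r
    rw [Submodule.mem_annihilator_span_singleton]
    constructor
    · intro hr
      have hrx : r • T.mkQ x = 0 := by
        rw [hy, Submodule.mem_annihilator_span_singleton] at hr; exact hr
      have hrxT : r • x ∈ T := by
        rwa [← map_smul, Submodule.mkQ_apply, Submodule.Quotient.mk_eq_zero] at hrx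
      rw [smul_comm]
      exact hTkill _ hrxT _ (Ideal.pow_mem_pow hsI n)
    · intro hrs
      have h1 : (r * s ^ n) • x = 0 := by rw [mul_smul]; exact hrs
      have h2 : (r * s ^ n) • T.mkQ x = 0 := by rw [← map_smul, h1, map_zero]
      have h3 : r * s ^ n ∈ p := by
        rw [hy, Submodule.mem_annihilator_span_singleton]; exact h2
      rcases hp.mem_or_mem h3 with h4 | h4
      · exact h4
      · exact absurd (hp.mem_of_pow_mem n h4) hsp
  · rintro ⟨⟨hp, x, hx⟩, hIp⟩
    obtain ⟨s, hsI, hsp⟩ := SetLike.not_le_iff_exists.1 hIp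
    refine ⟨hp, ⟨T.mkQ x, ?_⟩⟩
    ext r
    rw [Submodule.mem_annihilator_span_singleton]
    constructor
    · intro hr
      rw [hx, Submodule.mem_annihilator_span_singleton] at hr
      rw [← map_smul, hr, map_zero]
    · intro h
      have hrxT : r • x ∈ T := by
        rwa [← map_smul, Submodule.mkQ_apply, Submodule.Quotient.mk_eq_zero] at h
      have h1 : s ^ n • r • x = 0 := hTkill _ hrxT _ (Ideal.pow_mem_pow hsI n)
      have h2 : (s ^ n * r) • x = 0 := by rw [mul_smul]; exact h1
      have h3 : s ^ n * r ∈ p := by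
        rw [hx, Submodule.mem_annihilator_span_singleton]; exact h2
      rcases hp.mem_or_mem h3 with h4 | h4
      · exact absurd (hp.mem_of_pow_mem n h4) hsp
      · exact h4

end Aux

/-- `Ass_R (N/(M :_N ⟨I⟩)) = Ass_R (N/M) \ V(I)`. -/
theorem associatedPrimes_quotient_colonInfty {R : Type*} [CommRing R] [IsNoetherianRing R]
    {M : Type*} [AddCommGroup M] [Module R M] [Module.Finite R M]
    (P : Submodule R M) (I : Ideal R) :
    associatedPrimes R (M ⧸ P.colonInfty I) =
      associatedPrimes R (M ⧸ P) \ {p : Ideal R | I ≤ p} := by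
  have hNoeth : IsNoetherian R M := inferInstance
  have hle : P ≤ P.colonInfty I := by
    refine le_trans ?_ (Submodule.colonIdeal_le_colonInfty P I 0)
    intro x hx r _
    exact P.smul_mem r hx
  have hmapIdeal : ∀ J : Ideal R,
      (P.colonIdeal J).map P.mkQ = (⊥ : Submodule R (M ⧸ P)).colonIdeal J := by
    intro J
    apply le_antisymm
    · rintro _ ⟨x, hx, rfl⟩ r hr
      have h0 : r • x ∈ P := hx r hr
      rw [Submodule.mem_bot, Submodule.mkQ_apply, ← Submodule.Quotient.mk_smul, Submodule.Quotient.mk_eq_zero]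
      exact h0
    · intro y hy
      obtain ⟨x, rfl⟩ := P.mkQ_surjective y
      refine ⟨x, fun r hr => ?_, rfl⟩
      have h1 : r • P.mkQ x ∈ (⊥ : Submodule R (M ⧸ P)) := hy r hr
      rw [Submodule.mem_bot, Submodule.mkQ_apply, ← Submodule.Quotient.mk_smul,
        Submodule.Quotient.mk_eq_zero] at h1
      exact h1
  have hmap : (P.colonInfty I).map P.mkQ = (⊥ : Submodule R (M ⧸ P)).colonInfty I := by
    rw [Submodule.colonInfty, Submodule.map_iSup]
    exact iSup_congr fun n => hmapIdeal (I ^ n)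
  have e := Submodule.quotientQuotientEquivQuotient P (P.colonInfty I) hle
  rw [hmap] at e
  rw [← LinearEquiv.AssociatedPrimes.eq e, ass_quotient_colonInfty_bot I]
end

section
/- Let R be a commutative Noetherian ring, I an ideal of R, and N a nonzero finitely generated R-module. Then the associated primes of the Rees module N[It] = ⊕_{n≥0} IⁿN over the Rees ring R[It] = ⊕_{n≥0} Iⁿtⁿ are exactly the primes of the form ⊕_{n≥0} (Iⁿ ∩ p) for p ∈ Ass_R(N); that is, Ass_{R[It]}(N[It]) = { ⊕_{n≥0} (Iⁿ ∩ p) : p ∈ Ass_R(N) }. -/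
universe u
set_option synthInstance.maxHeartbeats 1000000
set_option maxHeartbeats 1000000

open Polynomial in
/-- The homogeneous ideal `⊕ₙ (Iⁿ ∩ p)tⁿ` of the Rees algebra `R[It]`, consisting of those
elements all of whose coefficients lie in `p`. -/
def reesInter {R : Type*} [CommRing R] (I p : Ideal R) : Ideal (reesAlgebra I) where
  carrier := {f | ∀ n : ℕ, (f : R[X]).coeff n ∈ p}
  add_mem' := fun ha hb n => by
    simpa using p.add_mem (ha n) (hb n)
  zero_mem' := fun n => by simp
  smul_mem' := by
    intro c f hf n
    show ((c * f : reesAlgebra I) : R[X]).coeff n ∈ p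
    rw [Subalgebra.coe_mul, Polynomial.coeff_mul]
    exact Ideal.sum_mem p fun x _ => p.mul_mem_left _ (hf x.2)

open Polynomial PolynomialModule

section aux
variable {R : Type u} [CommRing R] {M : Type u} [AddCommGroup M] [Module R M]

noncomputable def PMsupport (x : PolynomialModule R M) : Finset ℕ := x.coeff.support

lemma PM_mem_support {x : PolynomialModule R M} {n : ℕ} : n ∈ PMsupport x ↔ x.coeff n ≠ 0 :=
  Finsupp.mem_support_iff

lemma PM_support_eq_empty {x : PolynomialModule R M} : PMsupport x = ∅ ↔ x = 0 :=
  Finsupp.support_eq_empty.trans PolynomialModule.coeff_eq_zero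

lemma kill (d : ℕ) (c : R) (f : R[X]) (hfd : f.coeff d = c)
    (hlow : ∀ i < d, f.coeff i = 0) :
    ∀ (k : ℕ) (x : PolynomialModule R M), (PMsupport x).card ≤ k → f • x = 0 →
      ((Polynomial.monomial d c : R[X]) ^ k) • x = 0 := by
  intro k
  induction k with
  | zero =>
    intro x hx _
    have hx0 : x = 0 := PM_support_eq_empty.mp (Finset.card_eq_zero.mp (Nat.le_zero.mp hx))
    simp [hx0]
  | succ k ih =>
    intro x hx hfx
    by_cases hx0 : x = 0
    · simp [hx0]
    · have hne : (PMsupport x).Nonempty :=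
        Finset.nonempty_iff_ne_empty.mpr (fun h => hx0 (PM_support_eq_empty.mp h))
      set e := (PMsupport x).min' hne with he
      have hce : c • x.coeff e = 0 := by
        have h1 : (f • x).coeff (d + e) = 0 := by rw [hfx]; rfl
        rw [PolynomialModule.smul_apply] at h1
        rw [Finset.sum_eq_single_of_mem (d, e) (by simp) ?_] at h1
        · rwa [hfd] at h1
        · rintro ⟨i, j⟩ hij hne2
          rw [Finset.HasAntidiagonal.mem_antidiagonal] at hij
          rcases lt_trichotomy i d with h | h | h
          · rw [hlow i h, zero_smul]
          · exfalso; apply hne2; subst h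
            have : j = e := by omega
            subst this; rfl
          · have hj : j < e := by omega
            have : x.coeff j = 0 := by
              by_contra hxj
              exact absurd ((PMsupport x).min'_le j (PM_mem_support.mpr hxj)) (by omega)
            rw [this, smul_zero]
      set g : R[X] := Polynomial.monomial d c with hg
      have hsub : PMsupport (g • x) ⊆ ((PMsupport x).erase e).image (· + d) := by
        intro n hn
        rw [PM_mem_support, hg, monomial_smul_apply] at hn
        by_cases hdn : d ≤ n
        · rw [if_pos hdn] at hn
          have hxnd : x.coeff (n - d) ≠ 0 := fun h => hn (by rw [h, smul_zero])
          have hnde : n - d ≠ e := fun h => hn (by rw [h]; exact hce)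
          exact Finset.mem_image.mpr ⟨n - d,
            Finset.mem_erase.mpr ⟨hnde, PM_mem_support.mpr hxnd⟩, by omega⟩
        · rw [if_neg hdn] at hn; exact absurd rfl hn
      have hcard : (PMsupport (g • x)).card ≤ k := by
        calc (PMsupport (g • x)).card ≤ (((PMsupport x).erase e).image (· + d)).card :=
              Finset.card_le_card hsub
          _ ≤ ((PMsupport x).erase e).card := Finset.card_image_le
          _ = (PMsupport x).card - 1 :=
              Finset.card_erase_of_mem ((PMsupport x).min'_mem hne)
          _ ≤ k := by omega
      have hfgx : f • (g • x) = 0 := by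
        rw [smul_smul, mul_comm, ← smul_smul, hfx, smul_zero]
      rw [pow_succ, ← smul_smul]
      exact ih (g • x) hcard hfgx

/-- The `n`-th homogeneous component of an element of the Rees algebra. -/
noncomputable def compA (I : Ideal R) (f : reesAlgebra I) (n : ℕ) : reesAlgebra I :=
  ⟨Polynomial.monomial n ((f : R[X]).coeff n), by
    rw [mem_reesAlgebra_iff]
    intro i
    rw [coeff_monomial]
    split
    · next h => exact h ▸ (mem_reesAlgebra_iff I _).mp f.2 n
    · exact zero_mem _⟩

lemma coe_compA (I : Ideal R) (f : reesAlgebra I) (n : ℕ) :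
    ((compA I f n : reesAlgebra I) : R[X]) = Polynomial.monomial n ((f : R[X]).coeff n) := rfl

lemma comps_mem {I : Ideal R} (q : Ideal (reesAlgebra I)) (hq : q.IsPrime)
    (x : PolynomialModule R M)
    (hmem : ∀ f : reesAlgebra I, f ∈ q ↔ (f : R[X]) • x = 0) :
    ∀ f ∈ q, ∀ n, compA I f n ∈ q := by
  suffices h : ∀ k : ℕ, ∀ f ∈ q, (f : R[X]).support.card ≤ k → ∀ n, compA I f n ∈ q by
    intro f hf n; exact h (f : R[X]).support.card f hf le_rfl n
  intro k
  induction k with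
  | zero =>
    intro f hf hcard n
    have hf0 : (f : R[X]) = 0 :=
      Polynomial.support_eq_empty.mp (Finset.card_eq_zero.mp (Nat.le_zero.mp hcard))
    have : compA I f n = 0 := by
      apply Subtype.ext; rw [coe_compA, hf0]; simp
    rw [this]; exact zero_mem q
  | succ k ih =>
    intro f hf hcard n
    by_cases hf0 : (f : R[X]) = 0
    · have : compA I f n = 0 := by
        apply Subtype.ext; rw [coe_compA, hf0]; simp
      rw [this]; exact zero_mem q
    · have hne : (f : R[X]).support.Nonempty := Polynomial.support_nonempty.mpr hf0
      set d := (f : R[X]).support.min' hne with hd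
      have hlow : ∀ i < d, (f : R[X]).coeff i = 0 := by
        intro i hi
        by_contra h
        exact absurd ((f : R[X]).support.min'_le i (Polynomial.mem_support_iff.mpr h)) (by omega)
      have hcd : compA I f d ∈ q := by
        have hk := kill d ((f : R[X]).coeff d) (f : R[X]) rfl hlow
          (PMsupport x).card x le_rfl ((hmem f).mp hf)
        apply hq.mem_of_pow_mem (PMsupport x).card
        rw [hmem]
        have hco : ((compA I f d ^ (PMsupport x).card : reesAlgebra I) : R[X])
            = (Polynomial.monomial d ((f : R[X]).coeff d) : R[X]) ^ (PMsupport x).card := by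
          rw [SubmonoidClass.coe_pow, coe_compA]
        rw [hco]
        exact hk
      rcases eq_or_ne n d with rfl | hnd
      · exact hcd
      · set f' := f - compA I f d with hf'
        have hf'q : f' ∈ q := q.sub_mem hf hcd
        have hcoef' : ∀ m : ℕ, m ≠ d → (f' : R[X]).coeff m = (f : R[X]).coeff m := by
          intro m hm
          rw [hf']
          push_cast
          rw [Polynomial.coeff_sub, coe_compA, coeff_monomial, if_neg (Ne.symm hm), sub_zero]
        have hcoefd : (f' : R[X]).coeff d = 0 := by
          rw [hf']
          push_cast
          rw [Polynomial.coeff_sub, coe_compA, coeff_monomial, if_pos rfl, sub_self]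
        have hsupp : (f' : R[X]).support ⊆ (f : R[X]).support.erase d := by
          intro m hm
          rw [Polynomial.mem_support_iff] at hm
          have hmd : m ≠ d := fun h => hm (h ▸ hcoefd)
          exact Finset.mem_erase.mpr ⟨hmd, Polynomial.mem_support_iff.mpr
            (fun h => hm ((hcoef' m hmd).trans h))⟩
        have hcard' : (f' : R[X]).support.card ≤ k := by
          calc (f' : R[X]).support.card ≤ ((f : R[X]).support.erase d).card :=
                Finset.card_le_card hsupp
            _ = (f : R[X]).support.card - 1 :=
                Finset.card_erase_of_mem ((f : R[X]).support.min'_mem hne)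
            _ ≤ k := by omega
        have := ih f' hf'q hcard' n
        have heq : compA I f n = compA I f' n := by
          apply Subtype.ext
          rw [coe_compA, coe_compA, hcoef' n hnd]
        rw [heq]
        exact this

end aux

section helpers


variable {R : Type u} [CommRing R] {M : Type u} [AddCommGroup M] [Module R M]

lemma mem_reesInter_iff {I p : Ideal R} {f : reesAlgebra I} :
    f ∈ reesInter I p ↔ ∀ n : ℕ, (f : R[X]).coeff n ∈ p := Iff.rfl

/-- The constant `r` as an element of the Rees algebra. -/
noncomputable def constA (I : Ideal R) (r : R) : reesAlgebra I :=
  ⟨Polynomial.C r, by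
    rw [mem_reesAlgebra_iff]
    intro i
    rw [coeff_C]
    split
    · next h => rw [h, pow_zero, Ideal.one_eq_top]; trivial
    · exact zero_mem _⟩

lemma coe_constA (I : Ideal R) (r : R) :
    ((constA I r : reesAlgebra I) : R[X]) = Polynomial.C r := rfl

lemma reesInter_isPrime (I : Ideal R) {p : Ideal R} (hp : p.IsPrime) :
    (reesInter I p).IsPrime := by
  haveI := hp
  have : reesInter I p = RingHom.ker
      ((Polynomial.mapRingHom (Ideal.Quotient.mk p)).comp
        ((reesAlgebra I).val.toRingHom)) := by
    ext f
    rw [mem_reesInter_iff, RingHom.mem_ker]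
    simp only [RingHom.comp_apply, coe_mapRingHom, AlgHom.toRingHom_eq_coe,
      RingHom.coe_coe, Subalgebra.coe_val]
    rw [Polynomial.ext_iff]
    refine forall_congr' fun n => ?_
    rw [coeff_map, Polynomial.coeff_zero, Ideal.Quotient.eq_zero_iff_mem]
  rw [this]
  exact RingHom.ker_isPrime _

lemma mem_ann_iff {I : Ideal R} (S : Submodule (reesAlgebra I) (PolynomialModule R M))
    (X : ↥S) (f : reesAlgebra I) :
    f ∈ (Submodule.span (reesAlgebra I) {X}).annihilator ↔
      (f : R[X]) • (X : PolynomialModule R M) = 0 := by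
  rw [Submodule.mem_annihilator_span_singleton, ← Subtype.coe_inj]
  rw [SetLike.val_smul, Subalgebra.smul_def, ZeroMemClass.coe_zero]

end helpers

/-- `Ass_{R[It]} (N[It]) = { ⊕ₙ (Iⁿ ∩ p)tⁿ : p ∈ Ass_R N }`, where the Rees
module `N[It] = ⊕ₙ IⁿN tⁿ` is realized as the submodule of `PolynomialModule R N` attached to
the `I`-adic (stable) filtration on `N`. -/
theorem associatedPrimes_reesModule {R : Type u} [CommRing R] [IsNoetherianRing R]
    {M : Type u} [AddCommGroup M] [Module R M] [Module.Finite R M] [Nontrivial M]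
    (I : Ideal R) :
    associatedPrimes (reesAlgebra I)
        (↥((I.stableFiltration (⊤ : Submodule R M)).submodule)) =
      {q : Ideal (reesAlgebra I) | ∃ p ∈ associatedPrimes R M, q = reesInter I p} := by
  set S := (I.stableFiltration (⊤ : Submodule R M)).submodule with hS
  ext q
  constructor
  · intro hqa
    obtain ⟨hq, X, hX⟩ := isAssociatedPrime_iff.mp hqa
    rw [Submodule.bot_colon'] at hX
    set x : PolynomialModule R M := (X : PolynomialModule R M) with hx
    have hmem : ∀ f : reesAlgebra I, f ∈ q ↔ (f : R[X]) • x = 0 := by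
      intro f; rw [hX]; exact mem_ann_iff S X f
    -- x ≠ 0
    have hx0 : x ≠ 0 := by
      intro h
      apply hq.ne_top
      rw [Ideal.eq_top_iff_one, hmem, h, smul_zero]
    -- Step A
    have hA : ∀ f ∈ q, ∀ n j : ℕ, (f : R[X]).coeff n • x.coeff j = 0 := by
      intro f hf n j
      have h1 : compA I f n ∈ q := comps_mem q hq x hmem f hf n
      have h2 := (hmem _).mp h1
      rw [coe_compA] at h2
      have h3 : ((Polynomial.monomial n ((f : R[X]).coeff n) : R[X]) • x).coeff (n + j) = 0 := by
        rw [h2]; rfl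
      rwa [monomial_smul_apply, if_pos (Nat.le_add_right n j), Nat.add_sub_cancel_left] at h3
    have hqsub : ∀ j : ℕ, q ≤ reesInter I (Submodule.span R {x.coeff j}).annihilator := by
      intro j f hf
      rw [mem_reesInter_iff]
      intro n
      rw [Submodule.mem_annihilator_span_singleton]
      exact hA f hf n j
    -- prod ≤ q
    have hprod : (PMsupport x).prod
        (fun j => reesInter I (Submodule.span R {x.coeff j}).annihilator) ≤ q := by
      refine le_trans Ideal.prod_le_inf ?_
      intro f hf
      rw [Submodule.mem_finsetInf] at hf
      rw [hmem]
      refine PolynomialModule.ext (Finsupp.ext fun n => ?_)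
      rw [PolynomialModule.smul_apply]
      rw [show (0 : PolynomialModule R M).coeff n = 0 from rfl]
      refine Finset.sum_eq_zero ?_
      rintro ⟨i, j⟩ _
      by_cases hj : j ∈ PMsupport x
      · have := (mem_reesInter_iff.mp (hf j hj)) i
        rwa [Submodule.mem_annihilator_span_singleton] at this
      · rw [not_ne_iff.mp (fun h => hj (PM_mem_support.mpr h)), smul_zero]
    obtain ⟨j, hjs, hle⟩ := hq.prod_le.mp hprod
    have hqe : q = reesInter I (Submodule.span R {x.coeff j}).annihilator :=
      le_antisymm (hqsub j) hle
    set p := (Submodule.span R {x.coeff j}).annihilator with hp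
    have hxj : x.coeff j ≠ 0 := PM_mem_support.mp hjs
    have hpprime : p.IsPrime := by
      rw [Ideal.isPrime_iff]
      constructor
      · intro h
        apply hxj
        have : (1 : R) ∈ p := h ▸ Submodule.mem_top
        rw [hp, Submodule.mem_annihilator_span_singleton, one_smul] at this
        exact this
      · intro a b hab
        have hmemab : constA I a * constA I b ∈ q := by
          rw [hqe, mem_reesInter_iff]
          intro n
          rw [Subalgebra.coe_mul, coe_constA, coe_constA, ← C_mul, coeff_C]
          split
          · exact hab
          · exact zero_mem _
        rcases hq.mem_or_mem hmemab with h | h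
        · left
          have := (mem_reesInter_iff.mp (hqe ▸ h)) 0
          rwa [coe_constA, coeff_C, if_pos rfl] at this
        · right
          have := (mem_reesInter_iff.mp (hqe ▸ h)) 0
          rwa [coe_constA, coeff_C, if_pos rfl] at this
    exact ⟨p, isAssociatedPrime_iff.mpr ⟨hpprime, x.coeff j, by rw [Submodule.bot_colon']⟩, hqe⟩
  · rintro ⟨p, hpa, rfl⟩
    obtain ⟨hp1, m, hm⟩ := isAssociatedPrime_iff.mp hpa
    rw [Submodule.bot_colon'] at hm
    have hXmem : (single R 0 m : PolynomialModule R M) ∈ S := by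
      rw [hS, Ideal.Filtration.mem_submodule]
      intro i
      show (single R 0 m : PolynomialModule R M).coeff i ∈ (I.stableFiltration (⊤ : Submodule R M)).N i
      rw [coeff_single, Finsupp.single_apply]
      split
      · next h =>
        subst h
        show m ∈ I ^ 0 • (⊤ : Submodule R M)
        rw [pow_zero, Ideal.one_eq_top, Submodule.top_smul]
        trivial
      · exact zero_mem _
    refine ⟨reesInter_isPrime I hp1, ⟨⟨single R 0 m, hXmem⟩, ?_⟩⟩
    suffices hann : reesInter I p =
        (Submodule.span (reesAlgebra I) {(⟨single R 0 m, hXmem⟩ : ↥S)}).annihilator by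
      rw [Submodule.bot_colon', ← hann, (reesInter_isPrime I hp1).radical]
    ext f
    rw [mem_ann_iff, mem_reesInter_iff]
    constructor
    · intro h
      refine PolynomialModule.ext (Finsupp.ext fun n => ?_)
      rw [show ((⟨single R 0 m, hXmem⟩ : ↥S) : PolynomialModule R M) = single R 0 m from rfl]
      rw [smul_single_apply, if_pos (Nat.zero_le n), Nat.sub_zero]
      rw [show (0 : PolynomialModule R M).coeff n = 0 from rfl]
      have := hm ▸ h n
      rwa [Submodule.mem_annihilator_span_singleton] at this
    · intro h n
      rw [hm, Submodule.mem_annihilator_span_singleton]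
      have := congrArg (fun y => y.coeff n) h
      simp only at this
      rwa [smul_single_apply, if_pos (Nat.zero_le n), Nat.sub_zero,
        show ((0 : PolynomialModule R M).coeff n) = 0 from rfl] at this
end

section
/- Let R be a commutative Noetherian ring, I an ideal of R, and N an R-module. Let {N_n}_{n≥0} be an I-filtration of N (a decreasing chain of submodules with I·N_n ⊆ N_{n+1} for all n). If the associated graded Rees module ⊕_{n≥0} N_n is finitely generated over the Rees ring R[It], then there exists an integer k such that N_{n+k} = Iⁿ·N_k for all n ≥ 0. -/
universe u

/-- If the Rees submodule of a filtration with `N 0 = ⊤` is finitely generated, then `M` is a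
finite `R`-module. -/
theorem module_finite_of_filtration_submodule_fg {R : Type u} [CommRing R]
    {M : Type u} [AddCommGroup M] [Module R M]
    (I : Ideal R) (F : I.Filtration M) (hF0 : F.N 0 = ⊤)
    (hF : F.submodule.FG) : Module.Finite R M := by
  classical
  obtain ⟨S, hS⟩ := hF
  refine ⟨⟨S.image (fun f : PolynomialModule R M => f.coeff 0), ?_⟩⟩
  rw [eq_top_iff]
  intro m _
  have hm : PolynomialModule.single R 0 m ∈ F.submodule := by
    rw [Ideal.Filtration.mem_submodule]
    intro i
    rw [PolynomialModule.coeff_single, Finsupp.single_apply]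
    split_ifs with h
    · rw [← h, hF0]; trivial
    · exact (F.N i).zero_mem
  rw [← hS] at hm
  have : (PolynomialModule.single R 0 m).coeff 0 = m := by
    rw [PolynomialModule.coeff_single, Finsupp.single_apply, if_pos rfl]
  rw [← this]
  have key : ∀ f ∈ Submodule.span (reesAlgebra I) (S : Set (PolynomialModule R M)),
      f.coeff 0 ∈ Submodule.span R
        ((S.image (fun f : PolynomialModule R M => f.coeff 0) : Finset M) : Set M) := by
    intro f hf
    induction hf using Submodule.span_induction with
    | mem x hx =>
      exact Submodule.subset_span (Finset.mem_coe.mpr (Finset.mem_image_of_mem _ hx))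
    | zero => simp only [PolynomialModule.coeff_zero, Finsupp.coe_zero, Pi.zero_apply]; exact Submodule.zero_mem _
    | add x y _ _ hx hy =>
      rw [PolynomialModule.coeff_add, Finsupp.add_apply]; exact Submodule.add_mem _ hx hy
    | smul r x _ hx =>
      rw [Subalgebra.smul_def, PolynomialModule.smul_apply]
      apply Submodule.sum_mem
      rintro ⟨j, k⟩ e
      rw [Finset.HasAntidiagonal.mem_antidiagonal] at e
      have hj : j = 0 := by omega
      have hk : k = 0 := by omega
      subst hj; subst hk
      exact Submodule.smul_mem _ _ hx
  exact key _ hm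

/-- If `{Nₙ}` is an `I`-filtration of `N` (with `N₀ = N`) whose Rees module
`⊕ₙ Nₙ` is finitely generated over the Rees ring `R[It]`, then there exists `k` such that
`N_{n+k} = Iⁿ • N_k` for all `n ≥ 0`. -/
theorem filtration_stable_of_submodule_fg {R : Type u} [CommRing R] [IsNoetherianRing R]
    {M : Type u} [AddCommGroup M] [Module R M]
    (I : Ideal R) (F : I.Filtration M) (hF0 : F.N 0 = ⊤)
    (hF : F.submodule.FG) :
    ∃ k : ℕ, ∀ n : ℕ, F.N (n + k) = I ^ n • F.N k := by
  have : Module.Finite R M := module_finite_of_filtration_submodule_fg I F hF0 hF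
  have hst : F.Stable := (F.submodule_fg_iff_stable fun i =>
    IsNoetherian.noetherian (F.N i)).mp hF
  obtain ⟨n₀, hn₀⟩ := hst.exists_pow_smul_eq
  exact ⟨n₀, fun n => by rw [add_comm]; exact hn₀ n⟩
end

section
/- Let (R, m) be a Noetherian local ring, I an ideal of R, and N an R-module. Set N_n = (IⁿN :_N ⟨m⟩), the union over s ≥ 0 of (IⁿN :_N mˢ). If the module ⊕_{n≥0} N_n is finitely generated over the Rees ring R[It], then there exists an integer k ≥ 0 such that (I^{n+k}N :_N ⟨m⟩) ⊆ IⁿN for all n ≥ 0. -/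
universe u

open PolynomialModule in
/-- Forward direction of `Ideal.Filtration.submodule_fg_iff_stable`, without the FG
hypothesis on the components. -/
theorem Ideal.Filtration.stable_of_submodule_fg {R : Type u} [CommRing R] {M : Type u}
    [AddCommGroup M] [Module R M] {I : Ideal R} (F : I.Filtration M)
    (hF : F.submodule.FG) : F.Stable := by
  classical
  delta Ideal.Filtration.Stable
  simp_rw [← F.submodule_eq_span_le_iff_stable_ge]
  refine hF.stabilizes_of_iSup_eq
      ⟨fun n₀ => Submodule.span _ (⋃ (i : ℕ) (_ : i ≤ n₀), single R i '' ↑(F.N i)), ?_⟩ ?_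
  · intro n m e
    rw [Submodule.span_le, Set.iUnion₂_subset_iff]
    intro i hi
    refine Set.Subset.trans ?_ Submodule.subset_span
    refine @Set.subset_iUnion₂ _ _ _ (fun i => fun _ => ↑((single R i) '' ((F.N i) : Set M))) i ?_
    exact hi.trans e
  · show (⨆ n₀ : ℕ, Submodule.span (reesAlgebra I) (⋃ (i : ℕ) (_ : i ≤ n₀), single R i '' (F.N i : Set M))) = F.submodule
    rw [← Submodule.span_iUnion, ← Ideal.Filtration.submodule_span_single]
    congr 1
    ext
    simp only [Set.mem_iUnion, Set.mem_image, SetLike.mem_coe, exists_prop]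
    constructor
    · rintro ⟨-, i, -, e⟩; exact ⟨i, e⟩
    · rintro ⟨i, e⟩; exact ⟨i, i, le_refl i, e⟩

/-- Let `(R, 𝔪)` be Noetherian local, `I` an ideal, `N` an `R`-module, and
`Nₙ = (IⁿN :_N ⟨𝔪⟩)`. If `⊕ₙ Nₙ` is finitely generated over the Rees ring `R[It]`, then there
exists `k ≥ 0` with `(I^{n+k}N :_N ⟨𝔪⟩) ⊆ IⁿN` for all `n ≥ 0`. -/
theorem colonInfty_maximalIdeal_le_smul_pow {R : Type u} [CommRing R] [IsNoetherianRing R]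
    [IsLocalRing R] {M : Type u} [AddCommGroup M] [Module R M]
    (I : Ideal R) (F : I.Filtration M)
    (hFN : ∀ n : ℕ, F.N n =
      (I ^ n • ⊤ : Submodule R M).colonInfty (IsLocalRing.maximalIdeal R))
    (hF : F.submodule.FG) :
    ∃ k : ℕ, ∀ n : ℕ,
      (I ^ (n + k) • ⊤ : Submodule R M).colonInfty (IsLocalRing.maximalIdeal R) ≤
        I ^ n • ⊤ := by
  obtain ⟨n₀, hn₀⟩ := (F.stable_of_submodule_fg hF).exists_pow_smul_eq
  refine ⟨n₀, fun n => ?_⟩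
  have := hn₀ n
  rw [Nat.add_comm n₀ n, hFN] at this
  rw [this]
  exact smul_mono_right _ le_top
end

section
/- Let R be a commutative Noetherian ring, N a finitely generated R-module, I an ideal of R with N/IN ≠ 0, S a multiplicatively closed subset of R, and suppose for each prime q in a finite set Λ ⊆ Spec(R) there exists k_q ≥ 0 such that (S(I^{n+k_q}N))_q ⊆ (IⁿN)_q for all n ≥ 0, where Λ contains Ass_R(N/IⁿN) for all n. Then with k = max{k_q : q ∈ Λ}, one has S(I^{n+k}N) ⊆ IⁿN for all n ≥ 0. -/
/-- The `S`-saturation `S(P) = ⋃_{s ∈ S} (P :_M s)` of a submodule `P`. -/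
def Submodule.sat {R : Type*} [CommRing R] {M : Type*} [AddCommGroup M] [Module R M]
    (S : Submonoid R) (P : Submodule R M) : Submodule R M where
  carrier := {x | ∃ s ∈ S, s • x ∈ P}
  add_mem' := by
    rintro a b ⟨s, hs, hsa⟩ ⟨t, ht, htb⟩
    refine ⟨s * t, S.mul_mem hs ht, ?_⟩
    rw [smul_add]
    refine P.add_mem ?_ ?_
    · rw [mul_smul, smul_comm]; exact P.smul_mem t hsa
    · rw [mul_smul]; exact P.smul_mem s htb
  zero_mem' := ⟨1, S.one_mem, by simp⟩
  smul_mem' := fun c x => by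
    rintro ⟨s, hs, hsx⟩
    exact ⟨s, hs, by rw [smul_comm]; exact P.smul_mem c hsx⟩

/-- Let `Λ` be a finite set of primes containing `Ass_R (N/IⁿN)` for all `n`.
If for each `q ∈ Λ` there is `k_q ≥ 0` with `(S(I^{n+k_q}N))_q ⊆ (IⁿN)_q` for all `n`, then
(taking `k = max {k_q}`) there is `k` with `S(I^{n+k}N) ⊆ IⁿN` for all `n`. -/
theorem sat_pow_le_of_localized {R : Type*} [CommRing R] [IsNoetherianRing R]
    {M : Type*} [AddCommGroup M] [Module R M] [Module.Finite R M]
    (I : Ideal R) (hI : (I • ⊤ : Submodule R M) ≠ ⊤) (S : Submonoid R)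
    (Λ : Finset (Ideal R)) (hΛp : ∀ q ∈ Λ, (q : Ideal R).IsPrime)
    (hΛ : ∀ n : ℕ, associatedPrimes R (M ⧸ (I ^ n • ⊤ : Submodule R M)) ⊆ Λ)
    (h : ∀ q ∈ Λ, ∃ k : ℕ, ∀ n : ℕ,
      ∀ x ∈ Submodule.sat S (I ^ (n + k) • ⊤ : Submodule R M),
        ∃ s ∉ q, s • x ∈ (I ^ n • ⊤ : Submodule R M)) :
    ∃ k : ℕ, ∀ n : ℕ,
      Submodule.sat S (I ^ (n + k) • ⊤ : Submodule R M) ≤ I ^ n • ⊤ := by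
  classical
  choose! kf hkf using h
  refine ⟨Λ.sup kf, fun n x hx => ?_⟩
  by_contra hxL
  set L : Submodule R M := I ^ n • ⊤ with hL
  have hmk : (Submodule.Quotient.mk x : M ⧸ L) ≠ 0 := by
    simpa [Submodule.Quotient.mk_eq_zero] using hxL
  obtain ⟨P, hP, hle⟩ :=
    exists_le_isAssociatedPrime_of_isNoetherianRing R (Submodule.Quotient.mk x : M ⧸ L) hmk
  have hPΛ : P ∈ Λ := hΛ n hP
  have hkle : kf P ≤ Λ.sup kf := Finset.le_sup hPΛ
  have hmono : (I ^ (n + Λ.sup kf) • ⊤ : Submodule R M) ≤ I ^ (n + kf P) • ⊤ :=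
    Submodule.smul_mono_left (Ideal.pow_le_pow_right (by omega))
  have hx' : x ∈ Submodule.sat S (I ^ (n + kf P) • ⊤ : Submodule R M) := by
    obtain ⟨s, hs, hsx⟩ := hx
    exact ⟨s, hs, hmono hsx⟩
  obtain ⟨s, hsP, hsx⟩ := hkf P hPΛ n x hx'
  refine hsP (hle ?_)
  rw [Submodule.mem_colon_singleton, Submodule.mem_bot, ← Submodule.Quotient.mk_smul,
    Submodule.Quotient.mk_eq_zero]
  exact hsx
end

section
/- Let R be a commutative Noetherian ring, N a finitely generated R-module, M ≤ N a submodule, and S, S' two multiplicatively closed subsets of R. If every associated prime of N/M disjoint from S is also disjoint from S', then S'(M) ⊆ S(M), where S(M) := ⋃_{s∈S}(M :_N s). In particular, if for all p ∈ Ass_R(N/M), p ∩ S = ∅ ⟺ p ∩ S' = ∅, then S(M) = S'(M). -/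
/-- Auxiliary: a single `s ∈ S` clearing a finite set of saturation memberships. -/
lemma exists_smul_finset_mem {R : Type*} [CommRing R] {M : Type*} [AddCommGroup M]
    [Module R M] (S : Submonoid R) (P : Submodule R M) (w : M) (T : Finset R)
    (hT : ∀ t ∈ T, t • w ∈ Submodule.sat S P) :
    ∃ s ∈ S, ∀ t ∈ T, s • t • w ∈ P := by
  classical
  induction T using Finset.induction_on with
  | empty => exact ⟨1, S.one_mem, by simp⟩
  | @insert a T ha ih =>
    obtain ⟨s, hs, hsP⟩ := ih fun t ht => hT t (Finset.mem_insert_of_mem ht)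
    obtain ⟨u, hu, huP⟩ := hT a (Finset.mem_insert_self a T)
    refine ⟨u * s, S.mul_mem hu hs, ?_⟩
    intro t ht
    rcases Finset.mem_insert.mp ht with rfl | ht
    · rw [mul_smul, smul_comm u s]; exact P.smul_mem s huP
    · rw [mul_smul]; exact P.smul_mem u (hsP t ht)

/-- If every associated prime of `N/M` disjoint from `S` is also disjoint
from `S'`, then `S'(M) ⊆ S(M)`. -/
theorem sat_le_sat {R : Type*} [CommRing R] [IsNoetherianRing R]
    {M : Type*} [AddCommGroup M] [Module R M] [Module.Finite R M]
    (P : Submodule R M) (S S' : Submonoid R)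
    (h : ∀ p ∈ associatedPrimes R (M ⧸ P),
      (∀ s ∈ S, s ∉ p) → (∀ s ∈ S', s ∉ p)) :
    Submodule.sat S' P ≤ Submodule.sat S P := by
  intro x hx
  obtain ⟨s', hs', hs'x⟩ := hx
  by_contra hxn
  -- Work in the quotient by the `S`-saturation of `P`.
  set Q := Submodule.sat S P with hQ
  have hPQ : P ≤ Q := fun m hm => ⟨1, S.one_mem, by simpa using hm⟩
  -- key: if `s • w ∈ Q` for some `s ∈ S`, then `w ∈ Q`.
  have key : ∀ (s : R), s ∈ S → ∀ w : M, s • w ∈ Q → w ∈ Q := by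
    rintro s hs w ⟨t, ht, htw⟩
    exact ⟨t * s, S.mul_mem ht hs, by rwa [mul_smul]⟩
  have hy : Q.mkQ x ≠ 0 := by
    simpa [Submodule.Quotient.mk_eq_zero] using hxn
  obtain ⟨p, hp, hle⟩ := exists_le_isAssociatedPrime_of_isNoetherianRing R (Q.mkQ x) hy
  have hs'p : s' ∈ p := by
    refine hle ((Submodule.mem_colon_singleton.trans (Submodule.mem_bot (R := R))).mpr ?_)
    rw [← map_smul, Submodule.mkQ_apply, Submodule.Quotient.mk_eq_zero]
    exact hPQ hs'x
  obtain ⟨hprime, z, hz⟩ := isAssociatedPrime_iff.mp hp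
  obtain ⟨w, rfl⟩ := Q.mkQ_surjective z
  -- `p` is disjoint from `S`
  have hdisj : ∀ s ∈ S, s ∉ p := by
    intro s hs hsp
    have hsw : s • w ∈ Q := by
      have := (Submodule.mem_colon_singleton.trans (Submodule.mem_bot (R := R))).mp (hz ▸ hsp)
      rwa [← map_smul, Submodule.mkQ_apply, Submodule.Quotient.mk_eq_zero] at this
    have hw : Q.mkQ w = 0 := by
      rw [Submodule.mkQ_apply, Submodule.Quotient.mk_eq_zero]
      exact key s hs w hsw
    apply hprime.ne_top
    rw [hz, hw]
    simp [Submodule.annihilator_bot, (Submodule.span_singleton_eq_bot).mpr rfl]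
  -- Lift `p` to an associated prime of `M ⧸ P`.
  obtain ⟨T, hT⟩ : p.FG := IsNoetherian.noetherian p
  have hTQ : ∀ t ∈ T, t • w ∈ Q := by
    intro t ht
    have htp : t ∈ p := hT ▸ Submodule.subset_span ht
    have := (Submodule.mem_colon_singleton.trans (Submodule.mem_bot (R := R))).mp (hz ▸ htp)
    rwa [← map_smul, Submodule.mkQ_apply, Submodule.Quotient.mk_eq_zero] at this
  obtain ⟨s, hs, hsP⟩ := exists_smul_finset_mem S P w T hTQ
  have hAss : p ∈ associatedPrimes R (M ⧸ P) := by
    refine isAssociatedPrime_iff.mpr ⟨hprime, P.mkQ (s • w), le_antisymm ?_ ?_⟩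
    · rw [← hT]
      rw [Ideal.span_le]
      intro t ht
      refine (Submodule.mem_colon_singleton.trans (Submodule.mem_bot (R := R))).mpr ?_
      rw [← map_smul, Submodule.mkQ_apply, Submodule.Quotient.mk_eq_zero]
      rw [smul_comm]
      exact hsP t ht
    · intro r hr
      have := (Submodule.mem_colon_singleton.trans (Submodule.mem_bot (R := R))).mp hr
      rw [← map_smul, Submodule.mkQ_apply, Submodule.Quotient.mk_eq_zero] at this
      rw [smul_comm] at this
      have hrw : r • w ∈ Q := ⟨s, hs, this⟩
      have : Q.mkQ (r • w) = 0 := by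
        rw [Submodule.mkQ_apply, Submodule.Quotient.mk_eq_zero]; exact hrw
      rw [hz]
      refine (Submodule.mem_colon_singleton.trans (Submodule.mem_bot (R := R))).mpr ?_
      rw [map_smul] at this
      exact this
  exact h p hAss hdisj s' hs' hs'p
end
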